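/- Recursivity is preserved by natural transformations: given endofunctors F, G on a category C, a natural transformation α : G → F, and a recursive G-coalgebra c : C → GC, the F-coalgebra α_C ∘ c : C → FC is recursive. -/
import Mathlib


open CategoryTheory

universe v u

/-- Recursivity of coalgebras is preserved by natural transformations. -/
theorem stmt_5 {C : Type u} [Category.{v} C] (F G : C ⥤ C) (α : G ⟶ F)
    (X : C) (c : X ⟶ G.obj X)
    (hrec : ∀ (A : C) (a : G.obj A ⟶ A), ∃! h : X ⟶ A, h = c ≫ G.map h ≫ a)
    (A : C) (a : F.obj A ⟶ A) :
    ∃! h : X ⟶ A, h = (c ≫ α.app X) ≫ F.map h ≫ a := by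
  have key : ∀ h : X ⟶ A,
      ((c ≫ α.app X) ≫ F.map h ≫ a) = c ≫ G.map h ≫ α.app A ≫ a := by
    intro h
    rw [Category.assoc, ← Category.assoc (α.app X), ← α.naturality]
    simp
  obtain ⟨h, hh, huniq⟩ := hrec A (α.app A ≫ a)
  exact ⟨h, by show h = _; rw [key]; exact hh, fun y hy => huniq y (by show y = _; rw [← key]; exact hy)⟩
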